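/- (Bounded-interval integral representation with boundary terms) Let a > 0, f : [−1,1] → ℝ be C¹, and set w(x,z) = (f(z)+a f'(z))·Pk_a(z,x) where Pk_a(z,x) = (1+sign(x−z)·tanh((1+sign(x−z)z)/a))·k_a(z,x). Then for all x ∈ (−1,1): f(x) = ∫_{−1}^{1} w(x,z) dz + a·f(−1)·k_a(x,−1) − a·f(1)·k_a(x,1). -/

import Mathlib

set_option maxHeartbeats 1600000


/-- Bounded-interval integral representation with boundary terms: for `f` C¹ on
`[-1,1]` and `x ∈ (-1,1)`,
`f(x) = ∫_{-1}^1 (f(z) + a f'(z))·Pk_a(z,x) dz + a·f(-1)·k_a(x,-1) - a·f(1)·k_a(x,1)`. -/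
theorem bounded_integral_representation
    (a : ℝ) (ha : 0 < a)
    (f : ℝ → ℝ) (hf : ContDiffOn ℝ 1 f (Set.Icc (-1) 1))
    (k : ℝ → ℝ → ℝ)
    (hk : k = fun z x => Real.cosh ((1 + min z x) / a) * Real.cosh ((1 - max z x) / a) /
      (a * Real.sinh (2 / a)))
    (Pk : ℝ → ℝ → ℝ)
    (hPk : Pk = fun z x =>
      (1 + Real.sign (x - z) * Real.tanh ((1 + Real.sign (x - z) * z) / a)) * k z x)
    (w : ℝ → ℝ → ℝ)
    (hw : w = fun x z => (f z + a * derivWithin f (Set.Icc (-1) 1) z) * Pk z x)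
    (x : ℝ) (hx : x ∈ Set.Ioo (-1 : ℝ) 1) :
    f x = (∫ z in (-1 : ℝ)..1, w x z) + a * f (-1) * k x (-1) - a * f 1 * k x 1 := by
  obtain ⟨hx1, hx2⟩ := hx
  have ha' : a ≠ 0 := ne_of_gt ha
  set f' := derivWithin f (Set.Icc (-1 : ℝ) 1) with hf'def
  have hsinh : 0 < Real.sinh (2 / a) := by
    rw [Real.sinh_pos_iff]; positivity
  have hsinh' : Real.sinh (2 / a) ≠ 0 := ne_of_gt hsinh
  have hUD : UniqueDiffOn ℝ (Set.Icc (-1 : ℝ) 1) := uniqueDiffOn_Icc (by norm_num)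
  have hf'cont : ContinuousOn f' (Set.Icc (-1 : ℝ) 1) :=
    hf.continuousOn_derivWithin hUD le_rfl
  have hfcont : ContinuousOn f (Set.Icc (-1 : ℝ) 1) := hf.continuousOn
  have hderiv : ∀ z ∈ Set.Ioo (-1 : ℝ) 1, HasDerivAt f (f' z) z := by
    intro z hz
    have h1 : Set.Icc (-1 : ℝ) 1 ∈ nhds z := Icc_mem_nhds hz.1 hz.2
    exact ((hf.differentiableOn one_ne_zero z (Set.mem_Icc_of_Ioo hz)).hasDerivWithinAt).hasDerivAt h1
  set c₁ : ℝ := Real.cosh ((1 - x) / a) / Real.sinh (2 / a) with hc₁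
  set c₂ : ℝ := Real.cosh ((1 + x) / a) / Real.sinh (2 / a) with hc₂
  set D₁ : ℝ → ℝ := fun z => c₁ * ((f z + a * f' z) * Real.exp ((1 + z) / a) / a) with hD₁
  set D₂ : ℝ → ℝ := fun z => c₂ * ((f z + a * f' z) * Real.exp (-((1 - z) / a)) / a) with hD₂
  set F₁ : ℝ → ℝ := fun z => c₁ * (f z * Real.exp ((1 + z) / a)) with hF₁
  set F₂ : ℝ → ℝ := fun z => c₂ * (f z * Real.exp (-((1 - z) / a))) with hF₂
  -- tanh identities
  have hplus : ∀ t : ℝ, 1 + Real.tanh t = Real.exp t / Real.cosh t := by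
    intro t
    have hc : Real.cosh t ≠ 0 := ne_of_gt (Real.cosh_pos t)
    rw [Real.tanh_eq_sinh_div_cosh, eq_div_iff hc, add_mul, one_mul,
      div_mul_cancel₀ _ hc, Real.cosh_add_sinh]
  have hminus : ∀ t : ℝ, 1 + (-1) * Real.tanh t = Real.exp (-t) / Real.cosh t := by
    intro t
    have hc : Real.cosh t ≠ 0 := ne_of_gt (Real.cosh_pos t)
    rw [Real.tanh_eq_sinh_div_cosh, eq_div_iff hc, add_mul, one_mul, neg_one_mul,
      neg_mul, div_mul_cancel₀ _ hc, ← sub_eq_add_neg, Real.cosh_sub_sinh]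
  -- pointwise identification of w with D₁/D₂
  have hw1 : ∀ z, z < x → w x z = D₁ z := by
    intro z hzx
    have hs : Real.sign (x - z) = 1 := Real.sign_of_pos (by linarith)
    have hmin : min z x = z := min_eq_left hzx.le
    have hmax : max z x = x := max_eq_right hzx.le
    have hcosh : Real.cosh ((1 + z) / a) ≠ 0 := ne_of_gt (Real.cosh_pos _)
    simp only [hw, hPk, hk, hs, hmin, hmax, one_mul, hD₁, hc₁, ← hf'def]
    rw [hplus]
    field_simp
  have hw2 : ∀ z, x < z → w x z = D₂ z := by
    intro z hzx
    have hs : Real.sign (x - z) = -1 := Real.sign_of_neg (by linarith)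
    have hmin : min z x = x := min_eq_right hzx.le
    have hmax : max z x = z := max_eq_left hzx.le
    have hcosh : Real.cosh ((1 - z) / a) ≠ 0 := ne_of_gt (Real.cosh_pos _)
    have harg : (1 + (-1 : ℝ) * z) / a = (1 - z) / a := by ring
    simp only [hw, hPk, hk, hs, hmin, hmax, harg, hD₂, hc₂, ← hf'def]
    rw [hminus]
    field_simp
  -- continuity facts
  have hexpc1 : Continuous fun z : ℝ => Real.exp ((1 + z) / a) :=
    Real.continuous_exp.comp ((continuous_const.add continuous_id).div_const a)
  have hexpc2 : Continuous fun z : ℝ => Real.exp (-((1 - z) / a)) :=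
    Real.continuous_exp.comp (((continuous_const.sub continuous_id).div_const a).neg)
  have hD₁cont : ContinuousOn D₁ (Set.Icc (-1 : ℝ) 1) :=
    continuousOn_const.mul
      (((hfcont.add (continuousOn_const.mul hf'cont)).mul hexpc1.continuousOn).div_const a)
  have hD₂cont : ContinuousOn D₂ (Set.Icc (-1 : ℝ) 1) :=
    continuousOn_const.mul
      (((hfcont.add (continuousOn_const.mul hf'cont)).mul hexpc2.continuousOn).div_const a)
  have hs1 : Set.Icc (-1 : ℝ) x ⊆ Set.Icc (-1 : ℝ) 1 := Set.Icc_subset_Icc le_rfl hx2.le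
  have hs2 : Set.Icc x (1 : ℝ) ⊆ Set.Icc (-1 : ℝ) 1 := Set.Icc_subset_Icc hx1.le le_rfl
  have hsub1 : Set.uIcc (-1 : ℝ) x ⊆ Set.Icc (-1 : ℝ) 1 := by
    rw [Set.uIcc_of_le hx1.le]; exact hs1
  have hsub2 : Set.uIcc x (1 : ℝ) ⊆ Set.Icc (-1 : ℝ) 1 := by
    rw [Set.uIcc_of_le hx2.le]; exact hs2
  have hD₁int : IntervalIntegrable D₁ MeasureTheory.volume (-1) x :=
    (hD₁cont.mono hsub1).intervalIntegrable
  have hD₂int : IntervalIntegrable D₂ MeasureTheory.volume x 1 :=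
    (hD₂cont.mono hsub2).intervalIntegrable
  -- a.e. equality of w with D₁/D₂ on the two pieces
  have haex : ∀ᵐ z : ℝ, z ≠ x := by
    refine MeasureTheory.ae_iff.2 ?_
    simp
  have hae1 : w x =ᵐ[MeasureTheory.volume.restrict (Set.uIoc (-1 : ℝ) x)] D₁ := by
    filter_upwards [MeasureTheory.ae_restrict_mem measurableSet_uIoc,
      MeasureTheory.ae_restrict_of_ae haex] with z hzm hzne
    rw [Set.uIoc_of_le hx1.le] at hzm
    exact hw1 z (lt_of_le_of_ne hzm.2 hzne)
  have hae2 : w x =ᵐ[MeasureTheory.volume.restrict (Set.uIoc x (1 : ℝ))] D₂ := by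
    filter_upwards [MeasureTheory.ae_restrict_mem measurableSet_uIoc] with z hzm
    rw [Set.uIoc_of_le hx2.le] at hzm
    exact hw2 z hzm.1
  have hwint1 : IntervalIntegrable (w x) MeasureTheory.volume (-1) x :=
    hD₁int.congr_ae hae1.symm
  have hwint2 : IntervalIntegrable (w x) MeasureTheory.volume x 1 :=
    hD₂int.congr_ae hae2.symm
  have hint1 : ∫ z in (-1 : ℝ)..x, w x z = ∫ z in (-1 : ℝ)..x, D₁ z := by
    refine intervalIntegral.integral_congr_ae ?_
    filter_upwards [haex] with z hz hzm
    rw [Set.uIoc_of_le hx1.le] at hzm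
    exact hw1 z (lt_of_le_of_ne hzm.2 hz)
  have hint2 : ∫ z in x..(1 : ℝ), w x z = ∫ z in x..(1 : ℝ), D₂ z := by
    refine intervalIntegral.integral_congr_ae ?_
    filter_upwards [haex] with z _ hzm
    rw [Set.uIoc_of_le hx2.le] at hzm
    exact hw2 z hzm.1
  -- derivatives of the exponential factors
  have hE1 : ∀ z : ℝ, HasDerivAt (fun t => Real.exp ((1 + t) / a))
      (Real.exp ((1 + z) / a) / a) z := by
    intro z
    have h := (Real.hasDerivAt_exp ((1 + z) / a)).comp z
      (((hasDerivAt_id z).const_add 1).div_const a)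
    simpa [div_eq_mul_inv, mul_comm, Function.comp_def] using h
  have hE2 : ∀ z : ℝ, HasDerivAt (fun t => Real.exp (-((1 - t) / a)))
      (Real.exp (-((1 - z) / a)) / a) z := by
    intro z
    have hin : HasDerivAt (fun t : ℝ => -((1 - t) / a)) (1 / a) z := by
      have h0 : HasDerivAt (fun t : ℝ => (1 - t) / a) (-1 / a) z := by
        have := ((hasDerivAt_id z).const_sub 1).div_const a
        simpa using this
      have := h0.neg
      exact this.congr_deriv (by ring)
    have h := (Real.hasDerivAt_exp (-((1 - z) / a))).comp z hin
    simpa [div_eq_mul_inv, mul_comm, Function.comp_def] using h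
  -- FTC on each piece
  have hFTC₁ : ∫ z in (-1 : ℝ)..x, D₁ z = F₁ x - F₁ (-1) := by
    refine intervalIntegral.integral_eq_sub_of_hasDeriv_right_of_le hx1.le ?_ ?_ hD₁int
    · exact continuousOn_const.mul ((hfcont.mono hs1).mul hexpc1.continuousOn)
    · intro z hz
      have hz' : z ∈ Set.Ioo (-1 : ℝ) 1 := ⟨hz.1, hz.2.trans hx2⟩
      have hd : HasDerivAt F₁ (D₁ z) z := by
        have h := ((hderiv z hz').mul (hE1 z)).const_mul c₁
        have heq : c₁ * (f' z * Real.exp ((1 + z) / a)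
            + f z * (Real.exp ((1 + z) / a) / a)) = D₁ z := by
          simp only [hD₁]
          congr 1
          field_simp
          ring
        rw [heq] at h
        exact h
      exact hd.hasDerivWithinAt
  have hFTC₂ : ∫ z in x..(1 : ℝ), D₂ z = F₂ 1 - F₂ x := by
    refine intervalIntegral.integral_eq_sub_of_hasDeriv_right_of_le hx2.le ?_ ?_ hD₂int
    · exact continuousOn_const.mul ((hfcont.mono hs2).mul hexpc2.continuousOn)
    · intro z hz
      have hz' : z ∈ Set.Ioo (-1 : ℝ) 1 := ⟨hx1.trans hz.1, hz.2⟩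
      have hd : HasDerivAt F₂ (D₂ z) z := by
        have h := ((hderiv z hz').mul (hE2 z)).const_mul c₂
        have heq : c₂ * (f' z * Real.exp (-((1 - z) / a))
            + f z * (Real.exp (-((1 - z) / a)) / a)) = D₂ z := by
          simp only [hD₂]
          congr 1
          field_simp
          ring
        rw [heq] at h
        exact h
      exact hd.hasDerivWithinAt
  -- assemble
  have hsplit : (∫ z in (-1 : ℝ)..1, w x z) = (F₁ x - F₁ (-1)) + (F₂ 1 - F₂ x) := by
    rw [← intervalIntegral.integral_add_adjacent_intervals hwint1 hwint2,
      hint1, hint2, hFTC₁, hFTC₂]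
  rw [hsplit, hk]
  have hmin1 : min x (-1 : ℝ) = -1 := min_eq_right hx1.le
  have hmax1 : max x (-1 : ℝ) = x := max_eq_left hx1.le
  have hmin2 : min x (1 : ℝ) = x := min_eq_left hx2.le
  have hmax2 : max x (1 : ℝ) = 1 := max_eq_right hx2.le
  have e1 : (1 + (-1 : ℝ)) / a = 0 := by norm_num
  have e2 : ((1 : ℝ) - 1) / a = 0 := by norm_num
  have e3 : -(((1 : ℝ) - 1) / a) = 0 := by norm_num
  simp only [hF₁, hF₂, hc₁, hc₂, hmin1, hmax1, hmin2, hmax2, e1, e2, e3,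
    Real.exp_zero, Real.cosh_zero, mul_one, one_mul]
  -- key hyperbolic identity
  have h24 : Real.exp (2 / a) = Real.exp ((1 + x) / a) * Real.exp ((1 - x) / a) := by
    rw [← Real.exp_add]
    congr 1
    field_simp
    ring
  have hP : Real.exp ((1 + x) / a) ≠ 0 := Real.exp_ne_zero _
  have hQ : Real.exp ((1 - x) / a) ≠ 0 := Real.exp_ne_zero _
  have key : Real.cosh ((1 - x) / a) * Real.exp ((1 + x) / a)
      - Real.cosh ((1 + x) / a) * Real.exp ((x - 1) / a) = Real.sinh (2 / a) := by
    have harg : (x - 1) / a = -((1 - x) / a) := by ring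
    rw [harg, Real.cosh_eq ((1 - x) / a), Real.cosh_eq ((1 + x) / a), Real.sinh_eq (2 / a),
      Real.exp_neg ((1 + x) / a), Real.exp_neg ((1 - x) / a), Real.exp_neg (2 / a), h24]
    field_simp
    ring
  field_simp [ha', hsinh']
  rw [neg_zero, Real.exp_zero, show -((1 - x) / a) = (x - 1) / a by ring]
  linear_combination (-f x) * key
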